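/- Let X and Y be independent random vectors in ℝᵖ with finite second moments, equal means (Δ = 0), and equal sums of coordinate variances. Let the coordinates of X be x_j with centered versions x̃_j and covariance matrix Σ_X = (σ²_{X,j₁j₂}), similarly for Y. Define L₂^{XY} = Var(|X₁−Y₁|²), L₂^{X} = Var(|X₁−X₂|²), L₂^{Y} = Var(|Y₁−Y₂|²) where X₁,X₂ (resp. Y₁,Y₂) are i.i.d. copies. Then 2·L₂^{XY} − L₂^{X} − L₂^{Y} = −4·‖Σ_X − Σ_Y‖_F², where ‖·‖_F is the Frobenius norm. -/

import Mathlib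

open MeasureTheory

/-- Coordinatewise mean of a distribution on `ℝᵖ`. -/
noncomputable def coordMean {p : ℕ} (ν : Measure (EuclideanSpace ℝ (Fin p))) (j : Fin p) :
    ℝ :=
  ∫ x, x j ∂ν

/-- Covariance matrix entry `σ²_{j₁ j₂} = E[(x_{j₁} − m_{j₁})(x_{j₂} − m_{j₂})]`. -/
noncomputable def covEntry {p : ℕ} (ν : Measure (EuclideanSpace ℝ (Fin p)))
    (j₁ j₂ : Fin p) : ℝ :=
  ∫ x, (x j₁ - coordMean ν j₁) * (x j₂ - coordMean ν j₂) ∂ν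

/-- `L₂ = Var(‖X−Y‖²)` for independent `X ~ ν₁`, `Y ~ ν₂`. -/
noncomputable def varSqDist {p : ℕ} (ν₁ ν₂ : Measure (EuclideanSpace ℝ (Fin p))) : ℝ :=
  ∫ x, ∫ y, (‖x - y‖ ^ 2 - ∫ x', ∫ y', ‖x' - y'‖ ^ 2 ∂ν₂ ∂ν₁) ^ 2 ∂ν₂ ∂ν₁

section Aux
open Finset
set_option linter.unreachableTactic false
set_option linter.unusedTactic false

variable {p : ℕ}

noncomputable def mS (ν : Measure (EuclideanSpace ℝ (Fin p))) : ℝ := ∫ x, ‖x‖^2 ∂ν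
noncomputable def mQ (ν : Measure (EuclideanSpace ℝ (Fin p))) : ℝ := ∫ x, ‖x‖^4 ∂ν
noncomputable def mA (ν : Measure (EuclideanSpace ℝ (Fin p))) (j k : Fin p) : ℝ := ∫ x, x j * x k ∂ν
noncomputable def mM (ν : Measure (EuclideanSpace ℝ (Fin p))) (j : Fin p) : ℝ := ∫ x, x j ∂ν
noncomputable def mC (ν : Measure (EuclideanSpace ℝ (Fin p))) (j : Fin p) : ℝ := ∫ x, ‖x‖^2 * x j ∂ν

lemma contCoord (j : Fin p) : Continuous (fun x : EuclideanSpace ℝ (Fin p) => x j) :=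
  (EuclideanSpace.proj (𝕜 := ℝ) j).continuous

lemma abs_coord_le (x : EuclideanSpace ℝ (Fin p)) (j : Fin p) : |x j| ≤ ‖x‖ := by
  rw [EuclideanSpace.norm_eq]
  have : |x j| = Real.sqrt ((x j)^2) := by rw [Real.sqrt_sq_eq_abs]
  rw [this]
  apply Real.sqrt_le_sqrt
  simp only [Real.norm_eq_abs, sq_abs]
  exact Finset.single_le_sum (f := fun i => (x i)^2) (fun i _ => sq_nonneg _) (mem_univ j)

lemma pow_le_four (t : ℝ) (ht : 0 ≤ t) (k : ℕ) (hk : k ≤ 4) : t^k ≤ t^4 + 1 := by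
  rcases le_total t 1 with h | h
  · calc t^k ≤ 1 := pow_le_one₀ ht h
    _ ≤ t^4 + 1 := by nlinarith [pow_nonneg ht 4]
  · calc t^k ≤ t^4 := pow_le_pow_right₀ h hk
    _ ≤ t^4 + 1 := by linarith

section Integrability
variable {ν : Measure (EuclideanSpace ℝ (Fin p))} [IsProbabilityMeasure ν]

lemma integ_poly (h4 : Integrable (fun x : EuclideanSpace ℝ (Fin p) => ‖x‖ ^ 4) ν) {f : EuclideanSpace ℝ (Fin p) → ℝ} (hm : Continuous f) (hb : ∀ x, |f x| ≤ ‖x‖^4 + 1) :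
    Integrable f ν := by
  refine (h4.add (integrable_const 1)).mono' hm.aestronglyMeasurable ?_
  filter_upwards with x
  have : (0:ℝ) ≤ ‖x‖^4 + 1 := by positivity
  simpa [Real.norm_eq_abs, abs_of_nonneg this] using hb x

lemma int_normsq (h4 : Integrable (fun x : EuclideanSpace ℝ (Fin p) => ‖x‖ ^ 4) ν) : Integrable (fun x : EuclideanSpace ℝ (Fin p) => ‖x‖^2) ν := by
  refine integ_poly h4 (by continuity) fun x => ?_
  rw [abs_of_nonneg (by positivity)]
  exact pow_le_four ‖x‖ (norm_nonneg x) 2 (by norm_num)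

lemma int_coord (h4 : Integrable (fun x : EuclideanSpace ℝ (Fin p) => ‖x‖ ^ 4) ν) (j : Fin p) : Integrable (fun x : EuclideanSpace ℝ (Fin p) => x j) ν := by
  refine integ_poly h4 (contCoord j) fun x => ?_
  calc |x j| ≤ ‖x‖ := abs_coord_le x j
  _ = ‖x‖^1 := (pow_one _).symm
  _ ≤ ‖x‖^4 + 1 := pow_le_four _ (norm_nonneg x) 1 (by norm_num)

lemma int_coord_mul (h4 : Integrable (fun x : EuclideanSpace ℝ (Fin p) => ‖x‖ ^ 4) ν) (j k : Fin p) : Integrable (fun x : EuclideanSpace ℝ (Fin p) => x j * x k) ν := by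
  refine integ_poly h4 ((contCoord j).mul (contCoord k)) fun x => ?_
  calc |x j * x k| = |x j| * |x k| := abs_mul _ _
  _ ≤ ‖x‖ * ‖x‖ := mul_le_mul (abs_coord_le x j) (abs_coord_le x k) (abs_nonneg _) (norm_nonneg _)
  _ = ‖x‖^2 := (sq ‖x‖).symm
  _ ≤ ‖x‖^4 + 1 := pow_le_four _ (norm_nonneg x) 2 (by norm_num)

lemma int_normsq_coord (h4 : Integrable (fun x : EuclideanSpace ℝ (Fin p) => ‖x‖ ^ 4) ν) (j : Fin p) : Integrable (fun x : EuclideanSpace ℝ (Fin p) => ‖x‖^2 * x j) ν := by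
  refine integ_poly h4 (by exact (by continuity : Continuous (fun x : EuclideanSpace ℝ (Fin p) => ‖x‖^2)).mul (contCoord j)) fun x => ?_
  calc |‖x‖^2 * x j| = ‖x‖^2 * |x j| := by rw [abs_mul, abs_of_nonneg (by positivity)]
  _ ≤ ‖x‖^2 * ‖x‖ := by nlinarith [abs_coord_le x j, abs_nonneg (x j)]
  _ = ‖x‖^3 := by ring
  _ ≤ ‖x‖^4 + 1 := pow_le_four _ (norm_nonneg x) 3 (by norm_num)

end Integrability

lemma master {ν : Measure (EuclideanSpace ℝ (Fin p))} [IsProbabilityMeasure ν]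
    (h4 : Integrable (fun x : EuclideanSpace ℝ (Fin p) => ‖x‖ ^ 4) ν)
    (a b e : ℝ) (u : Fin p → Fin p → ℝ) (v w : Fin p → ℝ) :
    ∫ y, (a + b * ‖y‖^2 + e * ‖y‖^4 + (∑ j, ∑ k, u j k * (y j * y k))
        + (∑ j, v j * y j) + (∑ j, w j * (‖y‖^2 * y j))) ∂ν
      = a + b * mS ν + e * mQ ν + (∑ j, ∑ k, u j k * mA ν j k)
        + (∑ j, v j * mM ν j) + (∑ j, w j * mC ν j) := by
  have i1 : Integrable (fun _ : EuclideanSpace ℝ (Fin p) => a) ν := integrable_const a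
  have i2 : Integrable (fun y : EuclideanSpace ℝ (Fin p) => b * ‖y‖^2) ν := (int_normsq h4).const_mul b
  have i3 : Integrable (fun y : EuclideanSpace ℝ (Fin p) => e * ‖y‖^4) ν := h4.const_mul e
  have i4 : Integrable (fun y : EuclideanSpace ℝ (Fin p) => ∑ j, ∑ k, u j k * (y j * y k)) ν :=
    integrable_finset_sum _ fun j _ => integrable_finset_sum _ fun k _ =>
      (int_coord_mul h4 j k).const_mul _
  have i5 : Integrable (fun y : EuclideanSpace ℝ (Fin p) => ∑ j, v j * y j) ν :=
    integrable_finset_sum _ fun j _ => (int_coord h4 j).const_mul _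
  have i6 : Integrable (fun y : EuclideanSpace ℝ (Fin p) => ∑ j, w j * (‖y‖^2 * y j)) ν :=
    integrable_finset_sum _ fun j _ => (int_normsq_coord h4 j).const_mul _
  have i12 : Integrable (fun y : EuclideanSpace ℝ (Fin p) => a + b * ‖y‖^2) ν := i1.add i2
  have i13 : Integrable (fun y : EuclideanSpace ℝ (Fin p) => a + b * ‖y‖^2 + e * ‖y‖^4) ν := i12.add i3
  have i14 : Integrable (fun y : EuclideanSpace ℝ (Fin p) => a + b * ‖y‖^2 + e * ‖y‖^4 + ∑ j, ∑ k, u j k * (y j * y k)) ν := i13.add i4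
  have i15 : Integrable (fun y : EuclideanSpace ℝ (Fin p) => a + b * ‖y‖^2 + e * ‖y‖^4 + (∑ j, ∑ k, u j k * (y j * y k)) + ∑ j, v j * y j) ν := i14.add i5
  rw [integral_add i15 i6,
      integral_add i14 i5,
      integral_add i13 i4,
      integral_add i12 i3, integral_add i1 i2,
      integral_const, integral_const_mul, integral_const_mul,
      integral_finset_sum _ (fun j (_ : j ∈ univ) => integrable_finset_sum univ fun k _ => (int_coord_mul h4 j k).const_mul (u j k)),
      integral_finset_sum _ (fun j (_ : j ∈ univ) => (int_coord h4 j).const_mul (v j)),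
      integral_finset_sum _ (fun j (_ : j ∈ univ) => (int_normsq_coord h4 j).const_mul (w j))]
  simp only [probReal_univ, measure_univ, ENNReal.toReal_one, smul_eq_mul, one_mul, integral_const_mul]
  have hd : ∀ j : Fin p, (∫ y : EuclideanSpace ℝ (Fin p), ∑ k, u j k * (y j * y k) ∂ν) = ∑ k, u j k * mA ν j k := by
    intro j
    rw [integral_finset_sum _ fun k _ => (int_coord_mul h4 j k).const_mul (u j k)]
    exact Finset.sum_congr rfl fun k _ => integral_const_mul _ _
  simp only [hd, mS, mQ, mA, mM, mC]

lemma normsub (x y : EuclideanSpace ℝ (Fin p)) : ‖x - y‖^2 = ‖x‖^2 - 2*(∑ j, x j * y j) + ‖y‖^2 := by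
  rw [norm_sub_sq_real]
  have : (inner ℝ x y : ℝ) = ∑ j, x j * y j := by
    simp [PiLp.inner_apply, RCLike.inner_apply, conj_trivial, mul_comm]
  rw [this]

lemma inner_sq_int {ν : Measure (EuclideanSpace ℝ (Fin p))} [IsProbabilityMeasure ν]
    (h4 : Integrable (fun x : EuclideanSpace ℝ (Fin p) => ‖x‖ ^ 4) ν) (x : EuclideanSpace ℝ (Fin p)) :
    ∫ y, ‖x - y‖^2 ∂ν = ‖x‖^2 + mS ν - 2*∑ j, x j * mM ν j := by
  have h1 : (fun y : EuclideanSpace ℝ (Fin p) => ‖x - y‖^2)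
      = (fun y : EuclideanSpace ℝ (Fin p) => ‖x‖^2 + 1 * ‖y‖^2 + 0 * ‖y‖^4 + (∑ j, ∑ k, (0:ℝ) * (y j * y k))
          + (∑ j, (-2 * x j) * y j) + (∑ j, (0:ℝ) * (‖y‖^2 * y j))) := by
    funext y
    rw [normsub]
    have : ∑ j, (-2 * x j) * y j = -2 * ∑ j, x j * y j := by
      rw [Finset.mul_sum]; exact Finset.sum_congr rfl fun j _ => by ring
    simp only [zero_mul, Finset.sum_const_zero, add_zero, one_mul, this]
    ring
  rw [h1, master h4]
  have : ∑ j, (-2 * x j) * mM ν j = -2 * ∑ j, x j * mM ν j := by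
    rw [Finset.mul_sum]; exact Finset.sum_congr rfl fun j _ => by ring
  simp only [zero_mul, Finset.sum_const_zero, add_zero, one_mul, this]
  ring

lemma rEq {μ ν : Measure (EuclideanSpace ℝ (Fin p))} [IsProbabilityMeasure μ] [IsProbabilityMeasure ν]
    (h4μ : Integrable (fun x : EuclideanSpace ℝ (Fin p) => ‖x‖ ^ 4) μ) (h4ν : Integrable (fun x : EuclideanSpace ℝ (Fin p) => ‖x‖ ^ 4) ν) :
    (∫ x, ∫ y, ‖x - y‖^2 ∂ν ∂μ) = mS μ + mS ν - 2*∑ j, mM μ j * mM ν j := by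
  have h1 : (fun x : EuclideanSpace ℝ (Fin p) => ∫ y, ‖x - y‖^2 ∂ν)
      = (fun x : EuclideanSpace ℝ (Fin p) => mS ν + 1 * ‖x‖^2 + 0 * ‖x‖^4 + (∑ j, ∑ k, (0:ℝ) * (x j * x k))
          + (∑ j, (-2 * mM ν j) * x j) + (∑ j, (0:ℝ) * (‖x‖^2 * x j))) := by
    funext x
    rw [inner_sq_int h4ν x]
    have : ∑ j, (-2 * mM ν j) * x j = -2 * ∑ j, x j * mM ν j := by
      rw [Finset.mul_sum]; exact Finset.sum_congr rfl fun j _ => by ring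
    simp only [zero_mul, Finset.sum_const_zero, add_zero, one_mul, this]
    ring
  rw [h1, master h4μ]
  have : ∑ j, (-2 * mM ν j) * mM μ j = -2 * ∑ j, mM μ j * mM ν j := by
    rw [Finset.mul_sum]; exact Finset.sum_congr rfl fun j _ => by ring
  simp only [zero_mul, Finset.sum_const_zero, add_zero, one_mul, this]
  ring

lemma inner4 {ν : Measure (EuclideanSpace ℝ (Fin p))} [IsProbabilityMeasure ν]
    (h4ν : Integrable (fun x : EuclideanSpace ℝ (Fin p) => ‖x‖ ^ 4) ν) (x : EuclideanSpace ℝ (Fin p)) (r : ℝ) :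
    ∫ y, (‖x - y‖^2 - r)^2 ∂ν
      = (‖x‖^2 - r)^2 + 2*(‖x‖^2 - r)*mS ν + mQ ν
        + 4*(∑ j, ∑ k, (x j * x k) * mA ν j k)
        - 4*(‖x‖^2 - r)*(∑ j, x j * mM ν j) - 4*(∑ j, x j * mC ν j) := by
  have h1 : (fun y : EuclideanSpace ℝ (Fin p) => (‖x - y‖^2 - r)^2)
      = (fun y : EuclideanSpace ℝ (Fin p) => (‖x‖^2 - r)^2 + (2*(‖x‖^2 - r)) * ‖y‖^2 + 1 * ‖y‖^4
          + (∑ j, ∑ k, (4*(x j * x k)) * (y j * y k))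
          + (∑ j, (-4*(‖x‖^2 - r)*x j) * y j)
          + (∑ j, (-4*x j) * (‖y‖^2 * y j))) := by
    funext y
    rw [normsub]
    have hT : (∑ j, x j * y j)^2 = ∑ j, ∑ k, (x j * x k) * (y j * y k) := by
      rw [sq, Finset.sum_mul_sum]
      exact Finset.sum_congr rfl fun j _ => Finset.sum_congr rfl fun k _ => by ring
    have h2 : ∑ j, ∑ k, (4*(x j * x k)) * (y j * y k)
        = 4 * ∑ j, ∑ k, (x j * x k) * (y j * y k) := by
      rw [Finset.mul_sum]
      exact Finset.sum_congr rfl fun j _ => by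
        rw [Finset.mul_sum]; exact Finset.sum_congr rfl fun k _ => by ring
    have h3 : ∑ j, (-4*(‖x‖^2 - r)*x j) * y j
        = -4*(‖x‖^2 - r) * ∑ j, x j * y j := by
      rw [Finset.mul_sum]
      exact Finset.sum_congr rfl fun j _ => by ring
    have h4 : ∑ j, (-4*x j) * (‖y‖^2 * y j) = (-4*‖y‖^2) * ∑ j, x j * y j := by
      rw [Finset.mul_sum]
      exact Finset.sum_congr rfl fun j _ => by ring
    rw [h2, h3, h4, ← hT]
    ring
  rw [h1, master h4ν]
  have h2 : ∑ j, ∑ k, (4*(x j * x k)) * mA ν j k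
      = 4 * ∑ j, ∑ k, (x j * x k) * mA ν j k := by
    rw [Finset.mul_sum]
    exact Finset.sum_congr rfl fun j _ => by rw [Finset.mul_sum]; exact Finset.sum_congr rfl fun k _ => by ring
  have h3 : ∑ j, (-4*(‖x‖^2 - r)*x j) * mM ν j
      = -4*(‖x‖^2 - r) * ∑ j, x j * mM ν j := by
    rw [Finset.mul_sum]
    exact Finset.sum_congr rfl fun j _ => by ring
  have h4 : ∑ j, (-4*x j) * mC ν j = (-4:ℝ) * ∑ j, x j * mC ν j := by
    rw [Finset.mul_sum]
    exact Finset.sum_congr rfl fun j _ => by ring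
  rw [h2, h3, h4]
  ring

lemma varSqDist_eq {μ ν : Measure (EuclideanSpace ℝ (Fin p))} [IsProbabilityMeasure μ] [IsProbabilityMeasure ν]
    (h4μ : Integrable (fun x : EuclideanSpace ℝ (Fin p) => ‖x‖ ^ 4) μ)
    (h4ν : Integrable (fun x : EuclideanSpace ℝ (Fin p) => ‖x‖ ^ 4) ν) :
    varSqDist μ ν = mQ μ + mQ ν + 2*mS μ*mS ν + 4*(∑ j, ∑ k, mA μ j k * mA ν j k)
      - 4*(∑ j, mM ν j * mC μ j) - 4*(∑ j, mM μ j * mC ν j)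
      - (mS μ + mS ν - 2*(∑ j, mM μ j * mM ν j))^2 := by
  have hr : (∫ x, ∫ y, ‖x - y‖^2 ∂ν ∂μ) = mS μ + mS ν - 2*∑ j, mM μ j * mM ν j :=
    rEq h4μ h4ν
  set r : ℝ := ∫ x, ∫ y, ‖x - y‖^2 ∂ν ∂μ with hrdef
  have hv : varSqDist μ ν = ∫ x, ∫ y, (‖x - y‖^2 - r)^2 ∂ν ∂μ := rfl
  rw [hv]
  have h1 : (fun x : EuclideanSpace ℝ (Fin p) => ∫ y, (‖x - y‖^2 - r)^2 ∂ν)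
      = (fun x : EuclideanSpace ℝ (Fin p) => (r^2 - 2*r*mS ν + mQ ν) + (2*mS ν - 2*r) * ‖x‖^2 + 1 * ‖x‖^4
          + (∑ j, ∑ k, (4*mA ν j k) * (x j * x k))
          + (∑ j, (4*r*mM ν j - 4*mC ν j) * x j)
          + (∑ j, (-4*mM ν j) * (‖x‖^2 * x j))) := by
    funext x
    rw [inner4 h4ν x r]
    have h2 : ∑ j, ∑ k, (4*mA ν j k) * (x j * x k)
        = 4 * ∑ j, ∑ k, (x j * x k) * mA ν j k := by
      rw [Finset.mul_sum]
      exact Finset.sum_congr rfl fun j _ => by rw [Finset.mul_sum]; exact Finset.sum_congr rfl fun k _ => by ring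
    have h3 : ∑ j, (4*r*mM ν j - 4*mC ν j) * x j
        = 4*r*(∑ j, x j * mM ν j) - 4*(∑ j, x j * mC ν j) := by
      rw [Finset.mul_sum, Finset.mul_sum, ← Finset.sum_sub_distrib]
      exact Finset.sum_congr rfl fun j _ => by ring
    have h4 : ∑ j, (-4*mM ν j) * (‖x‖^2 * x j)
        = (-4*‖x‖^2) * ∑ j, x j * mM ν j := by
      rw [Finset.mul_sum]
      exact Finset.sum_congr rfl fun j _ => by ring
    rw [h2, h3, h4]
    ring
  rw [h1, master h4μ]
  have h2 : ∑ j, ∑ k, (4*mA ν j k) * mA μ j k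
      = 4 * ∑ j, ∑ k, mA μ j k * mA ν j k := by
    rw [Finset.mul_sum]
    exact Finset.sum_congr rfl fun j _ => by rw [Finset.mul_sum]; exact Finset.sum_congr rfl fun k _ => by ring
  have h3 : ∑ j, (4*r*mM ν j - 4*mC ν j) * mM μ j
      = 4*r*(∑ j, mM μ j * mM ν j) - 4*(∑ j, mM μ j * mC ν j) := by
    rw [Finset.mul_sum, Finset.mul_sum, ← Finset.sum_sub_distrib]
    exact Finset.sum_congr rfl fun j _ => by ring
  have h4 : ∑ j, (-4*mM ν j) * mC μ j = (-4:ℝ) * ∑ j, mM ν j * mC μ j := by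
    rw [Finset.mul_sum]
    exact Finset.sum_congr rfl fun j _ => by ring
  rw [h2, h3, h4, hr]
  ring

lemma norm_sq_sum (x : EuclideanSpace ℝ (Fin p)) : ‖x‖^2 = ∑ j, x j * x j := by
  rw [EuclideanSpace.norm_eq, Real.sq_sqrt (by positivity)]
  exact Finset.sum_congr rfl fun j _ => by
    rw [Real.norm_eq_abs, sq_abs, sq]

lemma mS_eq {ν : Measure (EuclideanSpace ℝ (Fin p))} [IsProbabilityMeasure ν]
    (h4 : Integrable (fun x : EuclideanSpace ℝ (Fin p) => ‖x‖ ^ 4) ν) : mS ν = ∑ j, mA ν j j := by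
  have h1 : (∫ x : EuclideanSpace ℝ (Fin p), ‖x‖^2 ∂ν) = ∫ x : EuclideanSpace ℝ (Fin p), ∑ j, x j * x j ∂ν := by
    congr 1; funext x; exact norm_sq_sum x
  rw [mS, h1, integral_finset_sum _ fun j _ => int_coord_mul h4 j j]
  rfl

lemma cov_eq {ν : Measure (EuclideanSpace ℝ (Fin p))} [IsProbabilityMeasure ν]
    (h4 : Integrable (fun x : EuclideanSpace ℝ (Fin p) => ‖x‖ ^ 4) ν) (j k : Fin p) :
    covEntry ν j k = mA ν j k - mM ν j * mM ν k := by
  have hmm : coordMean ν = mM ν := rfl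
  rw [covEntry, hmm]
  have h1 : (fun x : EuclideanSpace ℝ (Fin p) => (x j - mM ν j) * (x k - mM ν k))
      = fun x : EuclideanSpace ℝ (Fin p) => x j * x k + ((-(mM ν k)) * x j + ((-(mM ν j)) * x k + mM ν j * mM ν k)) :=
    funext fun x => by ring
  rw [h1]
  have ia := int_coord_mul h4 j k
  have ib : Integrable (fun x : EuclideanSpace ℝ (Fin p) => (-(mM ν k)) * x j) ν := (int_coord h4 j).const_mul _
  have ic : Integrable (fun x : EuclideanSpace ℝ (Fin p) => (-(mM ν j)) * x k) ν := (int_coord h4 k).const_mul _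
  have id' : Integrable (fun _ : EuclideanSpace ℝ (Fin p) => mM ν j * mM ν k) ν := integrable_const _
  have icd : Integrable (fun x : EuclideanSpace ℝ (Fin p) => (-(mM ν j)) * x k + mM ν j * mM ν k) ν := ic.add id'
  have ibcd : Integrable (fun x : EuclideanSpace ℝ (Fin p) => (-(mM ν k)) * x j + ((-(mM ν j)) * x k + mM ν j * mM ν k)) ν := ib.add icd
  rw [integral_add ia ibcd, integral_add ib icd, integral_add ic id',
      integral_const_mul, integral_const_mul, integral_const]
  simp only [probReal_univ, measure_univ, ENNReal.toReal_one, smul_eq_mul, one_mul]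
  show mA ν j k + (-(mM ν k) * mM ν j + (-(mM ν j) * mM ν k + mM ν j * mM ν k)) = _
  ring

lemma mM_coord {ν : Measure (EuclideanSpace ℝ (Fin p))} [IsProbabilityMeasure ν]
    (h4 : Integrable (fun x : EuclideanSpace ℝ (Fin p) => ‖x‖ ^ 4) ν) (j : Fin p) :
    mM ν j = (∫ x, x ∂ν) j := by
  have hInt : Integrable (fun x : EuclideanSpace ℝ (Fin p) => x) ν := by
    refine (h4.add (integrable_const 1)).mono' continuous_id.aestronglyMeasurable ?_
    filter_upwards with x
    have h1 : ‖x‖ ≤ ‖x‖^4 + 1 := by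
      simpa using pow_le_four ‖x‖ (norm_nonneg x) 1 (by norm_num)
    have h2 : (0:ℝ) ≤ ‖x‖^4 + 1 := by positivity
    simpa [Real.norm_eq_abs, abs_of_nonneg h2] using h1
  have := (EuclideanSpace.proj (𝕜 := ℝ) j).integral_comp_comm hInt
  simpa [mM] using this

end Aux

/-- If `X` and `Y` are independent with finite fourth moments, equal means and equal sums of
coordinate variances, then `2·Var(‖X₁−Y₁‖²) − Var(‖X₁−X₂‖²) − Var(‖Y₁−Y₂‖²)
= −4‖Σ_X − Σ_Y‖_F²`. -/
theorem stmt_17 {p : ℕ} (ν₁ ν₂ : Measure (EuclideanSpace ℝ (Fin p)))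
    [IsProbabilityMeasure ν₁] [IsProbabilityMeasure ν₂]
    (h4X : Integrable (fun x => ‖x‖ ^ 4) ν₁) (h4Y : Integrable (fun y => ‖y‖ ^ 4) ν₂)
    (hmean : (∫ x, x ∂ν₁) = ∫ y, y ∂ν₂)
    (hvar : (∑ j : Fin p, covEntry ν₁ j j) = ∑ j : Fin p, covEntry ν₂ j j) :
    2 * varSqDist ν₁ ν₂ - varSqDist ν₁ ν₁ - varSqDist ν₂ ν₂
      = -4 * ∑ j₁ : Fin p, ∑ j₂ : Fin p, (covEntry ν₁ j₁ j₂ - covEntry ν₂ j₁ j₂) ^ 2 := by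
  have hm' : mM ν₂ = mM ν₁ := by
    funext j
    rw [mM_coord h4Y j, mM_coord h4X j, hmean]
  have hS : mS ν₂ = mS ν₁ := by
    have h1 : ∑ j : Fin p, covEntry ν₁ j j = mS ν₁ - ∑ j : Fin p, mM ν₁ j * mM ν₁ j := by
      simp only [cov_eq h4X]
      rw [Finset.sum_sub_distrib, ← mS_eq h4X]
    have h2 : ∑ j : Fin p, covEntry ν₂ j j = mS ν₂ - ∑ j : Fin p, mM ν₁ j * mM ν₁ j := by
      simp only [cov_eq h4Y, hm']
      rw [Finset.sum_sub_distrib, ← mS_eq h4Y]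
    rw [h1, h2] at hvar
    linarith
  rw [varSqDist_eq h4X h4Y, varSqDist_eq h4X h4X, varSqDist_eq h4Y h4Y]
  simp only [cov_eq h4X, cov_eq h4Y, hm', hS]
  have hexp : ∀ j k : Fin p,
      (mA ν₁ j k - mM ν₁ j * mM ν₁ k - (mA ν₂ j k - mM ν₁ j * mM ν₁ k)) ^ 2
        = mA ν₁ j k * mA ν₁ j k - 2 * (mA ν₁ j k * mA ν₂ j k) + mA ν₂ j k * mA ν₂ j k :=
    fun j k => by ring
  simp only [hexp, Finset.sum_add_distrib, Finset.sum_sub_distrib, ← Finset.mul_sum]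
  ring
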